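/- Continuing the previous setting with p an odd prime: if additionally the equation f₁,₁(m₁,₂(x₁,x₂)) = f₁,₁(x₁)·f₁,₁(x₂) holds for all x₁, x₂ ∈ {x, c} (with m₁,₂(c,c) = 0 and f₁,₁(c) = (1/2)x forced by the (1,2)-equation), then 0 = (1/4)x² in (ℤ/p)[x,x⁻¹], a contradiction. Hence the Dugger–Shipley algebra is not formal for any prime p. -/

import Mathlib

open LaurentPolynomial

/-- Integer powers `xⁿ` of an invertible element, written via `x` (for `n ≥ 0`) and a
chosen inverse `y` (for `n < 0`). -/
def zpow2 {A : Type} [Monoid A] (x y : A) (n : ℤ) : A :=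
  if 0 ≤ n then x ^ n.toNat else y ^ (-n).toNat

/-- Continuing the setting of Statement 10 with `p` an odd prime: if
additionally `f₁,₁(m₁,₂(x₁,x₂)) = f₁,₁(x₁)·f₁,₁(x₂)` holds for all `x₁, x₂ ∈ {x, c}`
(the derived `∞`-morphism equation for `(i,r) = (2,2)`), with `m₁,₂(c,c) = 0` and
`f₁,₁(c) = (1/2)·x` (forced by the `(1,2)`-equation), then `0 = (1/4)x²` in
`(ℤ/p)[x^{±1}]`, a contradiction.  Hence the Dugger–Shipley algebra is not formal for
any prime `p`. -/
theorem stmt_11 (p : ℕ) [Fact p.Prime] (hodd : p ≠ 2) (M : Type) [Ring M]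
    (x y c : M) (hxy : x * y = 1) (hyx : y * x = 1)
    (hc2 : c * c = 0) (hanti : c * x + x * c = 0)
    (b : Module.Basis (Bool × ℤ) ℤ M)
    (hb0 : ∀ n : ℤ, b (false, n) = zpow2 x y n)
    (hb1 : ∀ n : ℤ, b (true, n) = c * zpow2 x y n)
    (f01 f11 : M →+ LaurentPolynomial (ZMod p))
    (hf01x : ∀ n : ℤ, f01 (zpow2 x y n) = T n)
    (hf01c : ∀ n : ℤ, f01 (c * zpow2 x y n) = 0)
    (hf11x : ∀ n : ℤ, f11 (zpow2 x y n) = 0)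
    (hf11c : f11 c = (2 : ZMod p)⁻¹ • T 1)
    (m12 : M → M → M)
    (hm_xc : m12 x c = x * x) (hm_cx : m12 c x = 0)
    (hm_xx : m12 x x = 0) (hm_cc : m12 c c = 0)
    (heq12 : ∀ u v : M, (u = x ∨ u = c) → (v = x ∨ v = c) →
      f11 (u * v) + f01 (m12 u v) = f11 u * f01 v + f01 u * f11 v)
    (heq22 : ∀ u v : M, (u = x ∨ u = c) → (v = x ∨ v = c) →
      f11 (m12 u v) = f11 u * f11 v) :
    False := by
  have h := heq22 c c (Or.inr rfl) (Or.inr rfl)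
  rw [hm_cc, hf11c, map_zero] at h
  have h2 : (2 : ZMod p) ≠ 0 := by
    have hp := (Fact.out : p.Prime)
    intro h0
    have : p ∣ 2 := by
      have := (ZMod.natCast_eq_zero_iff 2 p).mp (by exact_mod_cast h0)
      exact this
    exact hodd ((Nat.prime_dvd_prime_iff_eq hp Nat.prime_two).mp this)
  have h2i : (2 : ZMod p)⁻¹ ≠ 0 := inv_ne_zero h2
  have : ((2 : ZMod p)⁻¹ • T 1 : LaurentPolynomial (ZMod p)) * ((2 : ZMod p)⁻¹ • T 1) ≠ 0 := by
    rw [smul_mul_smul_comm, T_mul]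
    intro h0
    rcases smul_eq_zero.mp h0 with h | h
    · exact mul_ne_zero h2i h2i h
    · rw [← T_add] at h
      have hd := LaurentPolynomial.degree_T (R := ZMod p) (1 + 1)
      rw [h, LaurentPolynomial.degree_zero] at hd
      exact absurd hd (by simp)
  exact this h.symm
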